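/- Let X = {0, 1, 2} (a three-point discrete metric space), f1 the cyclic permutation 0 ↦ 1 ↦ 2 ↦ 0, and f2 the inverse cyclic permutation 0 ↦ 2 ↦ 1 ↦ 0. Then both f1 and f2 are topologically transitive, but the multiple mapping F = {f1, f2} is NOT transitive: taking U = {0} and 𝒰 = {{0,2}} (a nonempty open subset of Ran(F) = {{1,2}, {0,2}, {0,1}, {0,1,2}}), there is no n ≥ 1 with F^n(0) ∈ 𝒰. -/

import Mathlib

open TopologicalSpace

/-- `mIter f₁ f₂ n x` is the set `F^n(x)` for the multiple mapping `F = {f₁, f₂}`: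
all points `f_{i₁} ∘ ⋯ ∘ f_{iₙ} (x)` with `i₁, …, iₙ ∈ {1, 2}`. -/
def mIter {X : Type*} (f₁ f₂ : X → X) : ℕ → X → Set X
  | 0, x => {x}
  | n + 1, x => f₁ '' mIter f₁ f₂ n x ∪ f₂ '' mIter f₁ f₂ n x

lemma mIter_finite {X : Type*} (f₁ f₂ : X → X) (n : ℕ) (x : X) :
    (mIter f₁ f₂ n x).Finite := by
  induction n with
  | zero => exact Set.finite_singleton x
  | succ n ih => exact (ih.image f₁).union (ih.image f₂)

lemma mIter_nonempty {X : Type*} (f₁ f₂ : X → X) (n : ℕ) (x : X) :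
    (mIter f₁ f₂ n x).Nonempty := by
  induction n with
  | zero => exact ⟨x, rfl⟩
  | succ n ih => exact (ih.image f₁).mono Set.subset_union_left

/-- `F^n(x)` as a nonempty compact subset of `X`. -/
def mIterNC {X : Type*} [TopologicalSpace X] (f₁ f₂ : X → X) (n : ℕ) (x : X) :
    NonemptyCompacts X :=
  ⟨⟨mIter f₁ f₂ n x, (mIter_finite f₁ f₂ n x).isCompact⟩, mIter_nonempty f₁ f₂ n x⟩

/-- The deleted orbit of `x` under `F = {f₁, f₂}`: the family `{F^n(x) : n ≥ 1}`. -/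
def deletedOrbit {X : Type*} (f₁ f₂ : X → X) (x : X) : Set (Set X) :=
  {S | ∃ n, 1 ≤ n ∧ S = mIter f₁ f₂ n x}

/-- `x` is a periodic point of `F = {f₁, f₂}`: its deleted orbit is finite and
`x ∈ F^m(x)` for some `m ≥ 1`. -/
def MPeriodicPt {X : Type*} (f₁ f₂ : X → X) (x : X) : Prop :=
  (deletedOrbit f₁ f₂ x).Finite ∧ ∃ m, 1 ≤ m ∧ x ∈ mIter f₁ f₂ m x

/-- `Ran(F) = {F^n(x) : n ≥ 1, x ∈ X}` as a set of nonempty compact subsets of `X`. -/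
def mRan {X : Type*} [TopologicalSpace X] (f₁ f₂ : X → X) : Set (NonemptyCompacts X) :=
  {K | ∃ n, 1 ≤ n ∧ ∃ x, K = mIterNC f₁ f₂ n x}

/-- Transitivity of the multiple mapping `F = {f₁, f₂}`: for every nonempty open
`U ⊆ X` and every nonempty relatively open subset `𝒰` of `Ran(F)` (in the Hausdorff
metric on nonempty compact subsets), there are `n ≥ 1` and `u ∈ U` with `F^n(u) ∈ 𝒰`. -/
def MTransitive {X : Type*} [MetricSpace X] (f₁ f₂ : X → X) : Prop :=
  ∀ U : Set X, IsOpen U → U.Nonempty →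
    ∀ 𝒰 : Set (NonemptyCompacts X), 𝒰.Nonempty →
      (∃ V : Set (NonemptyCompacts X), IsOpen V ∧ 𝒰 = V ∩ mRan f₁ f₂) →
      ∃ n, 1 ≤ n ∧ ∃ u ∈ U, mIterNC f₁ f₂ n u ∈ 𝒰

/-- Hausdorff metric sensitivity of the multiple mapping `F = {f₁, f₂}`;
`dist` on `NonemptyCompacts X` is the Hausdorff metric `d_H`. -/
def MSensitive {X : Type*} [MetricSpace X] (f₁ f₂ : X → X) : Prop :=
  ∃ δ > (0 : ℝ), ∀ U : Set X, IsOpen U → U.Nonempty →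
    ∃ x ∈ U, ∃ y ∈ U, ∃ n, 1 ≤ n ∧ δ < dist (mIterNC f₁ f₂ n x) (mIterNC f₁ f₂ n y)

/-- Topological transitivity of a single map. -/
def MapTransitive {X : Type*} [TopologicalSpace X] (f : X → X) : Prop :=
  ∀ U V : Set X, IsOpen U → U.Nonempty → IsOpen V → V.Nonempty →
    ∃ n, 1 ≤ n ∧ (f^[n] '' U ∩ V).Nonempty

/-- Sensitivity of a single map. -/
def MapSensitive {X : Type*} [MetricSpace X] (f : X → X) : Prop :=
  ∃ δ > (0 : ℝ), ∀ U : Set X, IsOpen U → U.Nonempty →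
    ∃ x ∈ U, ∃ y ∈ U, ∃ n, 1 ≤ n ∧ δ < dist (f^[n] x) (f^[n] y)

/-- The three-point space `{0, 1, 2} ⊆ ℝ` (a discrete compact metric space). -/
abbrev ThreePt : Type := ({0, 1, 2} : Set ℝ)

noncomputable def q0 : ThreePt := ⟨0, by norm_num⟩
noncomputable def q1 : ThreePt := ⟨1, by norm_num⟩
noncomputable def q2 : ThreePt := ⟨2, by norm_num⟩


lemma threept_cases (x : ThreePt) : x = q0 ∨ x = q1 ∨ x = q2 := by
  obtain ⟨v, hv⟩ := x
  rcases hv with h | h | h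
  · exact Or.inl (Subtype.ext h)
  · exact Or.inr (Or.inl (Subtype.ext h))
  · exact Or.inr (Or.inr (Subtype.ext h))

lemma q01 : q0 ≠ q1 := by intro h; have := congrArg Subtype.val h; norm_num [q0, q1] at this
lemma q02 : q0 ≠ q2 := by intro h; have := congrArg Subtype.val h; norm_num [q0, q2] at this
lemma q12 : q1 ≠ q2 := by intro h; have := congrArg Subtype.val h; norm_num [q1, q2] at this

lemma threept_dist_lt_one {x y : ThreePt} (h : dist x y < 1) : x = y := by
  rcases threept_cases x with rfl | rfl | rfl <;> rcases threept_cases y with rfl | rfl | rfl <;>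
    first
      | rfl
      | (exfalso; rw [Subtype.dist_eq] at h;
         simp only [q0, q1, q2, Real.dist_eq] at h; norm_num at h)

lemma cyc_trans {f : ThreePt → ThreePt} {a b c : ThreePt}
    (hab : f a = b) (hbc : f b = c) (hca : f c = a)
    (hcov : ∀ x : ThreePt, x = a ∨ x = b ∨ x = c) : MapTransitive f := by
  intro U V _ hU _ hV
  obtain ⟨u, hu⟩ := hU
  obtain ⟨v, hv⟩ := hV
  have step : ∀ n, 1 ≤ n → f^[n] u = v → ∃ n, 1 ≤ n ∧ (f^[n] '' U ∩ V).Nonempty :=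
    fun n hn he => ⟨n, hn, ⟨v, ⟨u, hu, he⟩, hv⟩⟩
  have it1 : ∀ x, f^[1] x = f x := fun x => rfl
  have it2 : ∀ x, f^[2] x = f (f x) := fun x => rfl
  have it3 : ∀ x, f^[3] x = f (f (f x)) := fun x => rfl
  rcases hcov u with rfl | rfl | rfl <;> rcases hcov v with rfl | rfl | rfl
  · exact step 3 (by norm_num) (by rw [it3, hab, hbc, hca])
  · exact step 1 (by norm_num) (by rw [it1, hab])
  · exact step 2 (by norm_num) (by rw [it2, hab, hbc])
  · exact step 2 (by norm_num) (by rw [it2, hbc, hca])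
  · exact step 3 (by norm_num) (by rw [it3, hbc, hca, hab])
  · exact step 1 (by norm_num) (by rw [it1, hbc])
  · exact step 1 (by norm_num) (by rw [it1, hca])
  · exact step 2 (by norm_num) (by rw [it2, hca, hab])
  · exact step 3 (by norm_num) (by rw [it3, hca, hab, hbc])

/-- on `X = {0, 1, 2}`, with `f₁` the cycle `0 ↦ 1 ↦ 2 ↦ 0` and `f₂` the
inverse cycle `0 ↦ 2 ↦ 1 ↦ 0`, both `f₁` and `f₂` are topologically transitive, but the
multiple mapping `F = {f₁, f₂}` is not transitive: indeed there is no `n ≥ 1` with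
`F^n(0) = {0, 2}`, witnessing failure for `U = {0}` and `𝒰 = {{0,2}}`. -/
theorem stmt13 (f₁ f₂ : ThreePt → ThreePt)
    (h1a : f₁ q0 = q1) (h1b : f₁ q1 = q2) (h1c : f₁ q2 = q0)
    (h2a : f₂ q0 = q2) (h2b : f₂ q2 = q1) (h2c : f₂ q1 = q0) :
    MapTransitive f₁ ∧ MapTransitive f₂ ∧
    ¬ MTransitive f₁ f₂ ∧
    ∀ n, 1 ≤ n → mIter f₁ f₂ n q0 ≠ ({q0, q2} : Set ThreePt) := by
  have hcov := threept_cases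
  have trans1 : MapTransitive f₁ := cyc_trans h1a h1b h1c hcov
  have trans2 : MapTransitive f₂ := by
    refine cyc_trans h2a h2b h2c ?_
    intro x; rcases hcov x with rfl | rfl | rfl <;> tauto
  -- computations of mIter at q0
  have m1 : mIter f₁ f₂ 1 q0 = {q1, q2} := by
    show f₁ '' {q0} ∪ f₂ '' {q0} = _
    simp [h1a, h2a, Set.pair_comm]
  have surj1 : ∀ y : ThreePt, ∃ x, f₁ x = y := by
    intro y; rcases hcov y with rfl | rfl | rfl
    exacts [⟨q2, h1c⟩, ⟨q0, h1a⟩, ⟨q1, h1b⟩]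
  have univ_step : ∀ m, mIter f₁ f₂ m q0 = Set.univ →
      mIter f₁ f₂ (m + 1) q0 = Set.univ := by
    intro m hm
    show f₁ '' mIter f₁ f₂ m q0 ∪ f₂ '' mIter f₁ f₂ m q0 = Set.univ
    rw [hm]
    apply Set.eq_univ_of_univ_subset
    intro y _
    obtain ⟨x, hx⟩ := surj1 y
    exact Or.inl ⟨x, trivial, hx⟩
  have m2 : mIter f₁ f₂ 2 q0 = Set.univ := by
    show f₁ '' mIter f₁ f₂ 1 q0 ∪ f₂ '' mIter f₁ f₂ 1 q0 = Set.univ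
    rw [m1]
    apply Set.eq_univ_of_univ_subset
    intro y _
    rcases hcov y with rfl | rfl | rfl
    · exact Or.inl ⟨q2, by simp, h1c⟩
    · exact Or.inr ⟨q2, by simp, h2b⟩
    · exact Or.inl ⟨q1, by simp, h1b⟩
  have muniv : ∀ n, 2 ≤ n → mIter f₁ f₂ n q0 = Set.univ := by
    intro n hn
    induction n with
    | zero => omega
    | succ k ih =>
      rcases Nat.lt_or_ge k 2 with hk | hk
      · interval_cases k
        · omega
        · exact m2
      · exact univ_step k (ih (by omega))
  have part4 : ∀ n, 1 ≤ n → mIter f₁ f₂ n q0 ≠ ({q0, q2} : Set ThreePt) := by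
    intro n hn heq
    rcases Nat.lt_or_ge n 2 with h2 | h2
    · interval_cases n
      rw [m1] at heq
      have : q1 ∈ ({q0, q2} : Set ThreePt) := heq ▸ (by simp)
      rcases this with h | h
      · exact q01 h.symm
      · exact q12 h
    · rw [muniv n h2] at heq
      have : q1 ∈ ({q0, q2} : Set ThreePt) := heq ▸ trivial
      rcases this with h | h
      · exact q01 h.symm
      · exact q12 h
  refine ⟨trans1, trans2, ?_, part4⟩
  intro hT
  -- U = {q0} is open
  have hUopen : IsOpen ({q0} : Set ThreePt) := by
    have : ({q0} : Set ThreePt) = Metric.ball q0 1 := by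
      ext x
      simp only [Set.mem_singleton_iff, Metric.mem_ball]
      constructor
      · rintro rfl; simp
      · intro h; exact threept_dist_lt_one h
    rw [this]; exact Metric.isOpen_ball
  set K₀ : NonemptyCompacts ThreePt := mIterNC f₁ f₂ 1 q1 with hK₀
  have hK₀carrier : (K₀ : Set ThreePt) = {q2, q0} := by
    show f₁ '' {q1} ∪ f₂ '' {q1} = _
    simp [h1b, h2c]
    exact Set.pair_comm q0 q2
  have hK₀ran : K₀ ∈ mRan f₁ f₂ := ⟨1, le_refl 1, q1, rfl⟩
  have key : ∀ K ∈ Metric.ball K₀ (1 / 2), (K : Set ThreePt) = (K₀ : Set ThreePt) := by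
    intro K hK
    rw [Metric.mem_ball] at hK
    have hne : EMetric.hausdorffEdist (K : Set ThreePt) (K₀ : Set ThreePt) ≠ ⊤ :=
      Metric.hausdorffEdist_ne_top_of_nonempty_of_bounded K.nonempty K₀.nonempty
        K.isCompact.isBounded K₀.isCompact.isBounded
    have hd : Metric.hausdorffDist (K : Set ThreePt) (K₀ : Set ThreePt) < 1 / 2 := by
      rwa [Metric.NonemptyCompacts.dist_eq] at hK
    apply Set.Subset.antisymm
    · intro x hx
      obtain ⟨y, hy, hxy⟩ := Metric.exists_dist_lt_of_hausdorffDist_lt hx hd hne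
      rwa [threept_dist_lt_one (lt_trans hxy (by norm_num))]
    · intro x hx
      obtain ⟨y, hy, hxy⟩ := Metric.exists_dist_lt_of_hausdorffDist_lt hx
        (by rwa [Metric.hausdorffDist_comm] at hd)
        (by rw [EMetric.hausdorffEdist_comm]; exact hne)
      rwa [threept_dist_lt_one (lt_trans hxy (by norm_num))]
  have hVwit : ∃ V : Set (NonemptyCompacts ThreePt), IsOpen V ∧
      ({K₀} : Set (NonemptyCompacts ThreePt)) = V ∩ mRan f₁ f₂ := by
    refine ⟨Metric.ball K₀ (1 / 2), Metric.isOpen_ball, ?_⟩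
    apply Set.Subset.antisymm
    · rintro K rfl
      exact ⟨Metric.mem_ball_self (by norm_num), hK₀ran⟩
    · rintro K ⟨hKball, hKran⟩
      exact NonemptyCompacts.ext (key K hKball)
  obtain ⟨n, hn, u, hu, hmem⟩ := hT {q0} hUopen ⟨q0, rfl⟩ {K₀} ⟨K₀, rfl⟩ hVwit
  rcases hu with rfl
  have hcar : mIter f₁ f₂ n q0 = ((K₀ : Set ThreePt)) := by
    rw [Set.mem_singleton_iff] at hmem
    exact congrArg (fun K : NonemptyCompacts ThreePt => (K : Set ThreePt)) hmem
  rw [hK₀carrier, Set.pair_comm] at hcar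
  exact part4 n hn hcar
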